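/- Let a, b, k ≥ 0 be integers and let λ = (a + b, a, 0). Then the key polynomial κ_{kλ, σ} for σ = [3,1,2] ∈ S_3 (with reduced word σ = s_2 s_1, so κ_{kλ,σ} = π_2(π_1(z_1^{k(a+b)} z_2^{ka}))) evaluated at z_1 = z_2 = z_3 = 1 equals (1/2)(bk + 1)(2ak + bk + 2), where kλ = (k(a+b), ka, 0). -/

import Mathlib

open MvPolynomial
open scoped Classical

/-- The Demazure operator `π_i(f) = ∂_i(z_i · f)` on `ℚ[z_1, …, z_n]`, where
`∂_i(h) = (h − s_i(h))/(z_i − z_{i+1})` and `s_i` swaps the variables `z_i` and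
`z_{i+1}` (indices are `0`-based, so `i` ranges over `0, …, n − 2`).  Since
`z_i − z_{i+1}` always divides `z_i·f − s_i(z_i·f)` and quotients are unique in the
integral domain `ℚ[z_1, …, z_n]`, the value below is the unique polynomial `g` with
`(z_i − z_{i+1})·g = z_i·f − s_i(z_i·f)`. -/
noncomputable def piOp (n : ℕ) (i : ℕ) (f : MvPolynomial (Fin n) ℚ) :
    MvPolynomial (Fin n) ℚ :=
  if h : i + 1 < n then
    if hg : ∃ g : MvPolynomial (Fin n) ℚ,
        (X (⟨i, Nat.lt_of_succ_lt h⟩ : Fin n) - X (⟨i + 1, h⟩ : Fin n)) * g =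
          X (⟨i, Nat.lt_of_succ_lt h⟩ : Fin n) * f -
            rename (Equiv.swap (⟨i, Nat.lt_of_succ_lt h⟩ : Fin n) (⟨i + 1, h⟩ : Fin n))
              (X (⟨i, Nat.lt_of_succ_lt h⟩ : Fin n) * f)
    then hg.choose else 0
  else 0


lemma piOp_eq {n i : ℕ} (h : i + 1 < n) (f g : MvPolynomial (Fin n) ℚ)
    (hg : (X (⟨i, Nat.lt_of_succ_lt h⟩ : Fin n) - X (⟨i + 1, h⟩ : Fin n)) * g =
      X (⟨i, Nat.lt_of_succ_lt h⟩ : Fin n) * f -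
        rename (Equiv.swap (⟨i, Nat.lt_of_succ_lt h⟩ : Fin n) (⟨i + 1, h⟩ : Fin n))
          (X (⟨i, Nat.lt_of_succ_lt h⟩ : Fin n) * f)) :
    piOp n i f = g := by
  have hne : (X (⟨i, Nat.lt_of_succ_lt h⟩ : Fin n) - X (⟨i + 1, h⟩ : Fin n) :
      MvPolynomial (Fin n) ℚ) ≠ 0 := by
    refine sub_ne_zero.mpr fun he => ?_
    have := MvPolynomial.X_injective he
    simp [Fin.ext_iff] at this
  have hex : ∃ g' : MvPolynomial (Fin n) ℚ,
      (X (⟨i, Nat.lt_of_succ_lt h⟩ : Fin n) - X (⟨i + 1, h⟩ : Fin n)) * g' =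
        X (⟨i, Nat.lt_of_succ_lt h⟩ : Fin n) * f -
          rename (Equiv.swap (⟨i, Nat.lt_of_succ_lt h⟩ : Fin n) (⟨i + 1, h⟩ : Fin n))
            (X (⟨i, Nat.lt_of_succ_lt h⟩ : Fin n) * f) := ⟨g, hg⟩
  unfold piOp
  rw [dif_pos h, dif_pos hex]
  exact mul_left_cancel₀ hne (hex.choose_spec.trans hg.symm)

/-- telescoping geometric identity -/
lemma geom_key (u v : Fin 3) (r : ℕ) :
    (X u - X v : MvPolynomial (Fin 3) ℚ) *
      (∑ i ∈ Finset.range (r + 1), X u ^ i * X v ^ (r - i)) =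
      X u ^ (r + 1) - X v ^ (r + 1) := by
  have := geom_sum₂_mul (X u : MvPolynomial (Fin 3) ℚ) (X v) (r + 1)
  rw [mul_comm] at this
  simpa using this

lemma sum_lin (c : ℚ) (n : ℕ) :
    ∑ j ∈ Finset.range n, (c + j) = n * c + n * (n - 1) / 2 := by
  induction n with
  | zero => simp
  | succ m ih =>
    rw [Finset.sum_range_succ, ih]
    push_cast
    ring

/-- For `λ = (a+b, a, 0)` and `σ = [3,1,2] = s_2 s_1 ∈ S_3` (in the `0`-based indexing
used here, `π_2 = piOp 3 1` and `π_1 = piOp 3 0`), the key polynomial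
`κ_{kλ,σ} = π_2(π_1(z_1^{k(a+b)} z_2^{ka}))` evaluated at `z_1 = z_2 = z_3 = 1` equals
`(1/2)(bk + 1)(2ak + bk + 2)`. -/
theorem key_312_eval_ones (a b k : ℕ) :
    MvPolynomial.eval (fun _ : Fin 3 => (1 : ℚ))
        (piOp 3 1 (piOp 3 0
          (X (0 : Fin 3) ^ (k * (a + b)) * X (1 : Fin 3) ^ (k * a)))) =
      ((b : ℚ) * k + 1) * (2 * a * k + (b : ℚ) * k + 2) / 2 := by
  set q := k * a with hq
  set d := k * b with hd
  have hpd : k * (a + b) = q + d := by rw [hq, hd]; ring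
  rw [hpd]
  -- step 1
  set g1 : MvPolynomial (Fin 3) ℚ :=
    X 0 ^ q * X 1 ^ q * ∑ i ∈ Finset.range (d + 1), X 0 ^ i * X 1 ^ (d - i) with hg1
  have h01 : (1 : ℕ) + 1 < 3 := by norm_num
  have e1 : piOp 3 0 (X (0 : Fin 3) ^ (q + d) * X (1 : Fin 3) ^ q) = g1 := by
    apply piOp_eq (by norm_num)
    have h0 : (⟨0, by norm_num⟩ : Fin 3) = 0 := rfl
    have h1 : (⟨0 + 1, by norm_num⟩ : Fin 3) = 1 := rfl
    rw [h0, h1]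
    simp only [map_mul, map_pow, rename_X, Equiv.swap_apply_left, Equiv.swap_apply_right, hg1]
    linear_combination (X (0 : Fin 3) ^ q * X 1 ^ q : MvPolynomial (Fin 3) ℚ) *
      geom_key 0 1 d
  rw [e1]
  -- step 2
  set g2 : MvPolynomial (Fin 3) ℚ :=
    ∑ i ∈ Finset.range (d + 1), X 0 ^ (q + i) *
      ∑ t ∈ Finset.range (q + (d - i) + 1), X 1 ^ t * X 2 ^ (q + (d - i) - t) with hg2
  have e2 : piOp 3 1 g1 = g2 := by
    apply piOp_eq (by norm_num)
    have h1 : (⟨1, by norm_num⟩ : Fin 3) = 1 := rfl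
    have h2 : (⟨1 + 1, by norm_num⟩ : Fin 3) = 2 := rfl
    rw [h1, h2]
    have hg1' : g1 = ∑ i ∈ Finset.range (d + 1), X 0 ^ (q + i) * X 1 ^ (q + (d - i)) := by
      rw [hg1, Finset.mul_sum]
      exact Finset.sum_congr rfl fun i _ => by ring
    have L : (X (1 : Fin 3) - X 2) * g2 = ∑ i ∈ Finset.range (d + 1),
        X (0 : Fin 3) ^ (q + i) * (X 1 ^ (q + (d - i) + 1) - X 2 ^ (q + (d - i) + 1)) := by
      rw [hg2, Finset.mul_sum]
      refine Finset.sum_congr rfl fun i _ => ?_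
      rw [← geom_key 1 2 (q + (d - i))]
      ring
    rw [L, hg1']
    have hswap0 : Equiv.swap (1 : Fin 3) 2 0 = 0 := by decide
    simp only [Finset.mul_sum, map_sum, map_mul, map_pow, rename_X,
      Equiv.swap_apply_left, Equiv.swap_apply_right, hswap0, ← Finset.sum_sub_distrib]
    exact Finset.sum_congr rfl fun i _ => by ring
  rw [e2, hg2]
  -- evaluation
  have ev : MvPolynomial.eval (fun _ : Fin 3 => (1 : ℚ)) g2 =
      ∑ i ∈ Finset.range (d + 1), ((q + (d - i) + 1 : ℕ) : ℚ) := by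
    rw [hg2]
    simp [Finset.sum_const]
  rw [← hg2, ev]
  have hrefl : ∑ i ∈ Finset.range (d + 1), ((q + (d - i) + 1 : ℕ) : ℚ) =
      ∑ j ∈ Finset.range (d + 1), ((q + j + 1 : ℕ) : ℚ) := by
    rw [← Finset.sum_range_reflect (fun j => ((q + j + 1 : ℕ) : ℚ)) (d + 1)]
    exact Finset.sum_congr rfl fun i hi => by norm_num
  rw [hrefl]
  have : ∑ j ∈ Finset.range (d + 1), ((q + j + 1 : ℕ) : ℚ) =
      ∑ j ∈ Finset.range (d + 1), (((q : ℚ) + 1) + j) := by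
    exact Finset.sum_congr rfl fun j _ => by push_cast; ring
  rw [this, sum_lin]
  rw [hq, hd]
  push_cast
  field_simp
  ring
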